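/- The WT allocation is weighted proportionally fair with weights ρ: if q is the WT-achieved vector and q′ any feasible vector, then Σ_{n=1}^N (w_n(q′_n) − w_n(q_n))/(w_n(q_n)/ρ_n) ≤ 0, where w_n(x) = x/p_n. -/

import Mathlib

open Finset

/-- Theorem 7: the WT policy is weighted proportionally fair with weights `ρ`.  Let
`q` be the WT-achieved vector (`q n = τ p n θ k ρ n` on the layer `H k \ H (k-1)`,
with `∑_{n ∈ H k} q n / p n = τ - I (H k)` for every `k`).  Then for any feasible
`q'`, `∑_n (w_n(q'_n) - w_n(q_n)) / (w_n(q_n)/ρ_n) ≤ 0`, where `w_n(x) = x / p n`. -/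
theorem stmt_14 (N : ℕ) (τ : ℝ) (hτ : 0 < τ) (p ρ : Fin N → ℝ)
    (hp : ∀ n, 0 < p n ∧ p n ≤ 1) (hρ : ∀ n, 0 < ρ n)
    (I : Finset (Fin N) → ℝ)
    (K : ℕ) (H : ℕ → Finset (Fin N)) (θ : ℕ → ℝ)
    (hH0 : H 0 = ∅) (hHK : H K = Finset.univ)
    (hchain : ∀ k, 1 ≤ k → k ≤ K → H (k-1) ⊂ H k)
    (hθ1 : 0 < θ 1)
    (hθmono : ∀ k j, 1 ≤ k → k < j → j ≤ K → θ k < θ j)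
    (q : Fin N → ℝ)
    (hq : ∀ k, 1 ≤ k → k ≤ K → ∀ n ∈ H k \ H (k-1), q n = τ * p n * θ k * ρ n)
    (hlayer : ∀ k, 1 ≤ k → k ≤ K → ∑ n ∈ H k, q n / p n = τ - I (H k))
    (q' : Fin N → ℝ) (hq'0 : ∀ n, 0 ≤ q' n)
    (hq'feas : ∀ S : Finset (Fin N), ∑ n ∈ S, q' n / p n ≤ τ - I S)
:
    ∑ n, (q' n / p n - q n / p n) / ((q n / p n) / ρ n) ≤ 0 := by
  classical
  set g : Fin N → ℝ := fun n => (q' n / p n - q n / p n) / ((q n / p n) / ρ n) with hg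
  set d : Fin N → ℝ := fun n => q' n / p n - q n / p n with hd
  have hθpos : ∀ k, 1 ≤ k → k ≤ K → 0 < θ k := by
    intro k hk1 hkK
    rcases eq_or_lt_of_le hk1 with h | h
    · rwa [← h]
    · exact hθ1.trans (hθmono 1 k le_rfl h hkK)
  have hA : ∀ k, 1 ≤ k → k ≤ K → ∑ n ∈ H k, d n ≤ 0 := by
    intro k hk1 hkK
    have h1 := hq'feas (H k)
    have h2 := hlayer k hk1 hkK
    have : ∑ n ∈ H k, d n = (∑ n ∈ H k, q' n / p n) - ∑ n ∈ H k, q n / p n := by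
      rw [hd, Finset.sum_sub_distrib]
    rw [this]; linarith
  have hglayer : ∀ k, 1 ≤ k → k ≤ K → ∀ n ∈ H k \ H (k-1),
      g n = d n / (τ * θ k) := by
    intro k hk1 hkK n hn
    have hpn := (hp n).1
    have hρn := hρ n
    have hqn := hq k hk1 hkK n hn
    have hqp : q n / p n = τ * θ k * ρ n := by
      rw [hqn]; field_simp
    have hden : q n / p n / ρ n = τ * θ k := by
      rw [hqp]
      field_simp
    rw [hg, hd]
    simp only [hden]
  have key : ∀ k, 1 ≤ k → k ≤ K →
      ∑ n ∈ H k, g n ≤ (∑ n ∈ H k, d n) / (τ * θ k) := by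
    intro k
    induction k with
    | zero => intro h; omega
    | succ k ih =>
      intro _ hkK
      have hsub : H k ⊆ H (k+1) := by
        have := hchain (k+1) (by omega) hkK
        simpa using this.subset
      have hsdiff : ∀ f : Fin N → ℝ,
          ∑ n ∈ H (k+1), f n = ∑ n ∈ H k, f n + ∑ n ∈ H (k+1) \ H k, f n := by
        intro f
        rw [← Finset.sum_sdiff hsub]
        exact add_comm _ _
      have hgs : ∑ n ∈ H (k+1) \ H k, g n
          = (∑ n ∈ H (k+1) \ H k, d n) / (τ * θ (k+1)) := by
        rw [Finset.sum_div]
        refine Finset.sum_congr rfl ?_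
        intro n hn
        have := hglayer (k+1) (by omega) hkK n (by simpa using hn)
        simpa using this
      have hθk1 : 0 < τ * θ (k+1) := mul_pos hτ (hθpos (k+1) (by omega) hkK)
      by_cases hk0 : k = 0
      · subst hk0
        rw [hsdiff g, hsdiff d, hgs, hH0, Finset.sum_empty, Finset.sum_empty,
          zero_add, zero_add]
        exact le_of_eq (by norm_num)
      · have hk1 : 1 ≤ k := Nat.one_le_iff_ne_zero.mpr hk0
        have hkK' : k ≤ K := by omega
        have ih' := ih hk1 hkK'
        have hθk : 0 < τ * θ k := mul_pos hτ (hθpos k hk1 hkK')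
        have hθlt : τ * θ k < τ * θ (k+1) :=
          mul_lt_mul_of_pos_left (hθmono k (k+1) hk1 (by omega) hkK) hτ
        have hAk : ∑ n ∈ H k, d n ≤ 0 := hA k hk1 hkK'
        have hmono : (∑ n ∈ H k, d n) / (τ * θ k) ≤ (∑ n ∈ H k, d n) / (τ * θ (k+1)) := by
          rw [div_le_div_iff₀ hθk hθk1]
          nlinarith
        calc ∑ n ∈ H (k+1), g n
            = ∑ n ∈ H k, g n + ∑ n ∈ H (k+1) \ H k, g n := hsdiff g
          _ ≤ (∑ n ∈ H k, d n) / (τ * θ k)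
              + (∑ n ∈ H (k+1) \ H k, d n) / (τ * θ (k+1)) := by
              rw [hgs]; exact add_le_add_left ih' _
          _ ≤ (∑ n ∈ H k, d n) / (τ * θ (k+1))
              + (∑ n ∈ H (k+1) \ H k, d n) / (τ * θ (k+1)) := by
              exact add_le_add_left hmono _
          _ = (∑ n ∈ H (k+1), d n) / (τ * θ (k+1)) := by
              rw [hsdiff d, add_div]
  rcases Nat.eq_zero_or_pos K with hK0 | hK1
  · have : (Finset.univ : Finset (Fin N)) = ∅ := by rw [← hHK, hK0, hH0]
    rw [show (∑ n, (q' n / p n - q n / p n) / ((q n / p n) / ρ n)) = ∑ n ∈ (Finset.univ : Finset (Fin N)), g n from rfl, this, Finset.sum_empty]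
  · have h := key K hK1 le_rfl
    rw [hHK] at h
    have hθK : 0 < τ * θ K := mul_pos hτ (hθpos K hK1 le_rfl)
    have hAK : ∑ n ∈ (Finset.univ : Finset (Fin N)), d n ≤ 0 := by
      rw [← hHK]; exact hA K hK1 le_rfl
    calc ∑ n, g n ≤ (∑ n, d n) / (τ * θ K) := h
      _ ≤ 0 := div_nonpos_of_nonpos_of_nonneg hAK hθK.le
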